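/- Let φ_1,…,φ_D be orthonormal vectors in ℝ^n and ε a vector of n independent Rademacher variables. Define χ = (∑_{j=1}^D ⟨ε, φ_j⟩²)^{1/2}. Then D − 2 ≤ (E[χ])² ≤ D. -/

import Mathlib

open Finset MeasureTheory ProbabilityTheory

set_option maxHeartbeats 1000000 in
/-- For an orthonormal family `φ_1, …, φ_D` in `ℝ^n` and a vector `ε` of independent
Rademacher variables, the chi-square type statistic `χ = (∑_j ⟨ε, φ_j⟩²)^{1/2}`
satisfies `D − 2 ≤ (E[χ])² ≤ D`. -/
theorem chi_expectation_bounds {n D : ℕ}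
    {Ω : Type*} [MeasurableSpace Ω] (P : Measure Ω) [IsProbabilityMeasure P]
    (ε : Fin n → Ω → ℝ) (hmeas : ∀ i, Measurable (ε i))
    (hind : iIndepFun ε P)
    (hrad : ∀ i, P {ω | ε i ω = 1} = 1/2 ∧ P {ω | ε i ω = -1} = 1/2)
    (φ : Fin D → Fin n → ℝ)
    (horth : ∀ j j', ∑ i, φ j i * φ j' i = if j = j' then 1 else 0)
    (χ : Ω → ℝ)
    (hχ : ∀ ω, χ ω = Real.sqrt (∑ j, (∑ i, ε i ω * φ j i) ^ 2)) :
    (D : ℝ) - 2 ≤ (∫ ω, χ ω ∂P) ^ 2 ∧ (∫ ω, χ ω ∂P) ^ 2 ≤ (D : ℝ) := by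
  classical
  -- trivial case D = 0
  rcases Nat.eq_zero_or_pos D with hD0 | hDpos
  · subst hD0
    simp only [hχ]
    norm_num
  have hD1 : (1:ℝ) ≤ (D:ℝ) := by exact_mod_cast hDpos
  have hDposR : (0:ℝ) < (D:ℝ) := by linarith
  -- helper: bounded measurable functions are integrable
  have hbi : ∀ (f : Ω → ℝ) (C : ℝ), Measurable f → (∀ ω, |f ω| ≤ C) → Integrable f P := by
    intro f C hf h
    exact (integrable_const C).mono' hf.aestronglyMeasurable
      (Filter.Eventually.of_forall fun ω => by simpa [Real.norm_eq_abs] using h ω)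
  -- the pointwise ±1 modification of ε
  set η : Fin n → Ω → ℝ := fun i ω => if ε i ω = 1 ∨ ε i ω = -1 then ε i ω else 1 with hη_def
  have hηmeas : ∀ i, Measurable (η i) := by
    intro i
    exact Measurable.ite (((hmeas i) (measurableSet_singleton 1)).union
      ((hmeas i) (measurableSet_singleton (-1)))) (hmeas i) measurable_const
  have hηval : ∀ i ω, η i ω = 1 ∨ η i ω = -1 := by
    intro i ω
    simp only [hη_def]
    split_ifs with h
    · exact h
    · exact Or.inl rfl
  have hηsq : ∀ i ω, η i ω * η i ω = 1 := by
    intro i ω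
    rcases hηval i ω with h | h <;> rw [h] <;> norm_num
  have hηabs : ∀ i ω, |η i ω| ≤ 1 := by
    intro i ω
    rcases hηval i ω with h | h <;> rw [h] <;> norm_num
  have hηae : ∀ i, η i =ᵐ[P] ε i := by
    intro i
    have hA : MeasurableSet {ω | ε i ω = 1} := (hmeas i) (measurableSet_singleton 1)
    have hB : MeasurableSet {ω | ε i ω = -1} := (hmeas i) (measurableSet_singleton (-1))
    have hdisj : Disjoint {ω | ε i ω = 1} {ω | ε i ω = -1} := by
      rw [Set.disjoint_left]
      intro ω h1 h2
      simp only [Set.mem_setOf_eq] at h1 h2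
      rw [h1] at h2; norm_num at h2
    have hu : P ({ω | ε i ω = 1} ∪ {ω | ε i ω = -1}) = 1 := by
      rw [measure_union hdisj hB, (hrad i).1, (hrad i).2]
      norm_num [ENNReal.inv_two_add_inv_two]
    have hcompl : P ({ω | ε i ω = 1} ∪ {ω | ε i ω = -1})ᶜ = 0 := by
      rw [measure_compl (hA.union hB) (measure_ne_top _ _), hu, measure_univ]
      simp
    rw [Filter.EventuallyEq, ae_iff]
    refine measure_mono_null ?_ hcompl
    intro ω hω
    simp only [Set.mem_setOf_eq] at hω
    simp only [Set.mem_compl_iff, Set.mem_union, Set.mem_setOf_eq]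
    intro hmem
    exact hω (by simp only [hη_def]; rw [if_pos hmem])
  -- the complement of {±1} is null
  have hnull : ∀ i, P ({ω | ε i ω = 1} ∪ {ω | ε i ω = -1})ᶜ = 0 := by
    intro i
    have hA : MeasurableSet {ω | ε i ω = 1} := (hmeas i) (measurableSet_singleton 1)
    have hB : MeasurableSet {ω | ε i ω = -1} := (hmeas i) (measurableSet_singleton (-1))
    have hdisj : Disjoint {ω | ε i ω = 1} {ω | ε i ω = -1} := by
      rw [Set.disjoint_left]
      intro ω h1 h2
      simp only [Set.mem_setOf_eq] at h1 h2
      rw [h1] at h2; norm_num at h2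
    have hu : P ({ω | ε i ω = 1} ∪ {ω | ε i ω = -1}) = 1 := by
      rw [measure_union hdisj hB, (hrad i).1, (hrad i).2]
      norm_num [ENNReal.inv_two_add_inv_two]
    rw [measure_compl (hA.union hB) (measure_ne_top _ _), hu, measure_univ]
    simp
  -- mean zero
  have hεint : ∀ i, ∫ ω, ε i ω ∂P = 0 := by
    intro i
    have hA : MeasurableSet {ω | ε i ω = 1} := (hmeas i) (measurableSet_singleton 1)
    have hB : MeasurableSet {ω | ε i ω = -1} := (hmeas i) (measurableSet_singleton (-1))
    have hC : MeasurableSet ({ω | ε i ω = 1} ∪ {ω | ε i ω = -1})ᶜ := (hA.union hB).compl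
    rw [← integral_congr_ae (hηae i)]
    have hpt : ∀ ω, η i ω = Set.indicator {ω | ε i ω = 1} (fun _ => (1:ℝ)) ω
        - Set.indicator {ω | ε i ω = -1} (fun _ => (1:ℝ)) ω
        + Set.indicator ({ω | ε i ω = 1} ∪ {ω | ε i ω = -1})ᶜ (fun _ => (1:ℝ)) ω := by
      intro ω
      simp only [hη_def, Set.indicator_apply, Set.mem_compl_iff, Set.mem_union, Set.mem_setOf_eq]
      by_cases h1 : ε i ω = 1
      · norm_num [h1]
      · by_cases h2 : ε i ω = -1 <;> norm_num [h1, h2]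
    simp_rw [hpt]
    have hiA : Integrable (fun a => Set.indicator {ω | ε i ω = 1} (fun _ => (1:ℝ)) a) P :=
      (integrable_const (1:ℝ)).indicator hA
    have hiB : Integrable (fun a => Set.indicator {ω | ε i ω = -1} (fun _ => (1:ℝ)) a) P :=
      (integrable_const (1:ℝ)).indicator hB
    have hiC : Integrable (fun a =>
        Set.indicator ({ω | ε i ω = 1} ∪ {ω | ε i ω = -1})ᶜ (fun _ => (1:ℝ)) a) P :=
      (integrable_const (1:ℝ)).indicator hC
    have hiAB : Integrable (fun a => Set.indicator {ω | ε i ω = 1} (fun _ => (1:ℝ)) a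
        - Set.indicator {ω | ε i ω = -1} (fun _ => (1:ℝ)) a) P := hiA.sub hiB
    rw [integral_add hiAB hiC, integral_sub hiA hiB,
        integral_indicator_const _ hA, integral_indicator_const _ hB, integral_indicator_const _ hC,
        measureReal_def, measureReal_def, measureReal_def, (hrad i).1, (hrad i).2, hnull i]
    norm_num
  -- second moments
  have hε2 : ∀ i i', i ≠ i' → ∫ ω, ε i ω * ε i' ω ∂P = 0 := by
    intro i i' hne
    have h := (hind.indepFun hne).integral_mul_eq_mul_integral (hmeas i).aestronglyMeasurable
      (hmeas i').aestronglyMeasurable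
    calc ∫ ω, ε i ω * ε i' ω ∂P = (∫ ω, ε i ω ∂P) * ∫ ω, ε i' ω ∂P := h
    _ = 0 := by rw [hεint, hεint]; ring
  have hη2 : ∀ i i', i ≠ i' → ∫ ω, η i ω * η i' ω ∂P = 0 := by
    intro i i' hne
    rw [integral_congr_ae (show
      (fun ω => η i ω * η i' ω) =ᵐ[P] fun ω => ε i ω * ε i' ω from (hηae i).mul (hηae i'))]
    exact hε2 i i' hne
  -- fourth moments
  have hη4 : ∀ i i' k k', i ≠ i' → k ≠ k' →
      ∫ ω, η i ω * η i' ω * (η k ω * η k' ω) ∂P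
        = if (k, k') = (i, i') ∨ (k, k') = (i', i) then 1 else 0 := by
    intro i i' k k' hii hkk
    by_cases hcase : (k, k') = (i, i') ∨ (k, k') = (i', i)
    · rw [if_pos hcase]
      have hpt : ∀ ω, η i ω * η i' ω * (η k ω * η k' ω) = 1 := by
        intro ω
        rcases hcase with h | h <;> rw [Prod.mk.injEq] at h <;> rw [h.1, h.2]
        · linear_combination (η i' ω * η i' ω) * hηsq i ω + hηsq i' ω
        · linear_combination (η i' ω * η i' ω) * hηsq i ω + hηsq i' ω
      simp_rw [hpt]
      simp
    · rw [if_neg hcase]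
      push_neg at hcase
      obtain ⟨hne1, hne2⟩ := hcase
      have red : ∀ (a b : Fin n), a ≠ b →
          (∀ ω, η i ω * η i' ω * (η k ω * η k' ω) = η a ω * η b ω) →
          ∫ ω, η i ω * η i' ω * (η k ω * η k' ω) ∂P = 0 := by
        intro a b hab hpt
        simp_rw [hpt]
        exact hη2 a b hab
      by_cases h1 : k = i
      · subst h1
        have hne : i' ≠ k' := fun h => hne1 (by rw [h])
        refine red i' k' hne fun ω => ?_
        calc η k ω * η i' ω * (η k ω * η k' ω) = (η k ω * η k ω) * (η i' ω * η k' ω) := by ring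
        _ = η i' ω * η k' ω := by rw [hηsq]; ring
      · by_cases h2 : k' = i
        · subst h2
          have hne : i' ≠ k := fun h => hne2 (by rw [h])
          refine red i' k hne fun ω => ?_
          calc η k' ω * η i' ω * (η k ω * η k' ω) = (η k' ω * η k' ω) * (η i' ω * η k ω) := by ring
          _ = η i' ω * η k ω := by rw [hηsq]; ring
        · by_cases h3 : k = i'
          · subst h3
            have hne : i ≠ k' := fun h => h2 h.symm
            refine red i k' hne fun ω => ?_
            calc η i ω * η k ω * (η k ω * η k' ω) = (η k ω * η k ω) * (η i ω * η k' ω) := by ring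
            _ = η i ω * η k' ω := by rw [hηsq]; ring
          · by_cases h4 : k' = i'
            · subst h4
              have hne : i ≠ k := fun h => h1 h.symm
              refine red i k hne fun ω => ?_
              calc η i ω * η k' ω * (η k ω * η k' ω) = (η k' ω * η k' ω) * (η i ω * η k ω) := by
                    ring
              _ = η i ω * η k ω := by rw [hηsq]; ring
            · have hd := hind.indepFun_mul_mul hmeas i i' k k'
                (fun h => h1 h.symm) (fun h => h2 h.symm) (fun h => h3 h.symm) (fun h => h4 h.symm)
              have hmm := hd.integral_mul_eq_mul_integral (((hmeas i).mul (hmeas i')).aestronglyMeasurable)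
                (((hmeas k).mul (hmeas k')).aestronglyMeasurable)
              rw [integral_congr_ae (show (fun ω => η i ω * η i' ω * (η k ω * η k' ω))
                  =ᵐ[P] fun ω => ε i ω * ε i' ω * (ε k ω * ε k' ω) from
                  ((hηae i).mul (hηae i')).mul ((hηae k).mul (hηae k')))]
              rw [show (∫ ω, ε i ω * ε i' ω * (ε k ω * ε k' ω) ∂P)
                  = (∫ ω, ε i ω * ε i' ω ∂P) * ∫ ω, ε k ω * ε k' ω ∂P from hmm]
              rw [hε2 i i' hii, hε2 k k' hkk]; ring
  -- basic product bound
  have hmul11 : ∀ x y : ℝ, |x| ≤ 1 → |y| ≤ 1 → |x * y| ≤ 1 := fun x y hx hy => by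
    rw [abs_mul]; nlinarith [abs_nonneg x, abs_nonneg y]
  have int_ηη : ∀ i i', Integrable (fun ω => η i ω * η i' ω) P := fun i i' =>
    hbi _ 1 ((hηmeas i).mul (hηmeas i')) fun ω => hmul11 _ _ (hηabs i ω) (hηabs i' ω)
  have int_η4 : ∀ i i' k k', Integrable (fun ω => η i ω * η i' ω * (η k ω * η k' ω)) P :=
    fun i i' k k' => hbi _ 1 (((hηmeas i).mul (hηmeas i')).mul ((hηmeas k).mul (hηmeas k')))
      fun ω => hmul11 _ _ (hmul11 _ _ (hηabs i ω) (hηabs i' ω))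
        (hmul11 _ _ (hηabs k ω) (hηabs k' ω))
  -- the Gram coefficients
  set a : Fin n → Fin n → ℝ := fun i i' => ∑ j, φ j i * φ j i' with ha_def
  set X : Fin D → Ω → ℝ := fun j ω => ∑ i, η i ω * φ j i with hX_def
  set S : Ω → ℝ := fun ω => ∑ j, X j ω ^ 2 with hS_def
  set T : Ω → ℝ := fun ω => ∑ p ∈ Finset.univ.offDiag, a p.1 p.2 * (η p.1 ω * η p.2 ω)
    with hT_def
  have hsymm : ∀ i i', a i' i = a i i' := fun i i' =>
    Finset.sum_congr rfl fun j _ => mul_comm _ _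
  -- pointwise chaos decomposition
  have hdecomp : ∀ ω, S ω = (D:ℝ) + T ω := by
    intro ω
    have lhs : S ω = ∑ j, ∑ i, ∑ i', (η i ω * η i' ω) * (φ j i * φ j i') := by
      simp only [hS_def, hX_def]
      refine Finset.sum_congr rfl fun j _ => ?_
      rw [sq, Finset.sum_mul_sum]
      exact Finset.sum_congr rfl fun i _ => Finset.sum_congr rfl fun i' _ => by ring
    have swap : ∑ j, ∑ i, ∑ i', (η i ω * η i' ω) * (φ j i * φ j i')
        = ∑ i, ∑ i', ∑ j, (η i ω * η i' ω) * (φ j i * φ j i') := by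
      rw [Finset.sum_comm]
      exact Finset.sum_congr rfl fun i _ => Finset.sum_comm
    have rhs : ∑ p ∈ (Finset.univ ×ˢ Finset.univ : Finset (Fin n × Fin n)),
          a p.1 p.2 * (η p.1 ω * η p.2 ω)
        = ∑ i, ∑ i', ∑ j, (η i ω * η i' ω) * (φ j i * φ j i') := by
      rw [Finset.sum_product]
      refine Finset.sum_congr rfl fun i _ => Finset.sum_congr rfl fun i' _ => ?_
      simp only [ha_def]
      rw [Finset.sum_mul]
      exact Finset.sum_congr rfl fun j _ => by ring
    have e1 : S ω = ∑ p ∈ (Finset.univ ×ˢ Finset.univ : Finset (Fin n × Fin n)),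
        a p.1 p.2 * (η p.1 ω * η p.2 ω) := by rw [lhs, swap, ← rhs]
    have hdiag : ∑ p ∈ (Finset.univ : Finset (Fin n)).diag, a p.1 p.2 * (η p.1 ω * η p.2 ω)
        = (D:ℝ) := by
      rw [Finset.sum_diag]
      have : ∀ i : Fin n, a i i * (η i ω * η i ω) = a i i := fun i => by
        rw [hηsq]; ring
      rw [Finset.sum_congr rfl fun i _ => this i]
      simp only [ha_def]
      rw [Finset.sum_comm]
      have : ∀ j : Fin D, ∑ i, φ j i * φ j i = 1 := fun j => by
        have := horth j j; rwa [if_pos rfl] at this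
      rw [Finset.sum_congr rfl fun j _ => this j]
      simp
    rw [e1, ← Finset.diag_union_offDiag,
        Finset.sum_union (Finset.disjoint_diag_offDiag _), hdiag, hT_def]
  -- integral of S
  have hTmeas : Measurable T :=
    Finset.measurable_sum _ fun p _ => ((hηmeas p.1).mul (hηmeas p.2)).const_mul _
  have hTbound : ∀ ω, |T ω| ≤ ∑ p ∈ Finset.univ.offDiag, |a p.1 p.2| := by
    intro ω
    refine (Finset.abs_sum_le_sum_abs _ _).trans (Finset.sum_le_sum fun p _ => ?_)
    rw [abs_mul]
    calc |a p.1 p.2| * |η p.1 ω * η p.2 ω| ≤ |a p.1 p.2| * 1 :=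
          mul_le_mul_of_nonneg_left (hmul11 _ _ (hηabs _ ω) (hηabs _ ω)) (abs_nonneg _)
    _ = |a p.1 p.2| := mul_one _
  have hTint : Integrable T P := hbi T _ hTmeas hTbound
  have hTint0 : ∫ ω, T ω ∂P = 0 := by
    simp only [hT_def]
    rw [integral_finset_sum _ fun p _ => (int_ηη p.1 p.2).const_mul _]
    refine Finset.sum_eq_zero fun p hp => ?_
    rw [MeasureTheory.integral_const_mul, hη2 p.1 p.2 (Finset.mem_offDiag.1 hp).2.2, mul_zero]
  have hSint : ∫ ω, S ω ∂P = (D:ℝ) := by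
    simp_rw [hdecomp]
    rw [integral_add (integrable_const _) hTint, integral_const, hTint0]
    simp
  -- integral of T ^ 2
  have hT2int : ∫ ω, T ω ^ 2 ∂P = 2 * ∑ p ∈ Finset.univ.offDiag, a p.1 p.2 ^ 2 := by
    have hpt : ∀ ω, T ω ^ 2 = ∑ p ∈ Finset.univ.offDiag, ∑ q ∈ Finset.univ.offDiag,
        a p.1 p.2 * a q.1 q.2 * (η p.1 ω * η p.2 ω * (η q.1 ω * η q.2 ω)) := by
      intro ω
      simp only [hT_def]
      rw [sq, Finset.sum_mul_sum]
      exact Finset.sum_congr rfl fun p _ => Finset.sum_congr rfl fun q _ => by ring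
    simp_rw [hpt]
    rw [integral_finset_sum _ fun p _ =>
      integrable_finset_sum _ fun q _ => (int_η4 p.1 p.2 q.1 q.2).const_mul _]
    rw [Finset.mul_sum]
    refine Finset.sum_congr rfl fun p hp => ?_
    obtain ⟨-, -, hpne⟩ := Finset.mem_offDiag.1 hp
    have hps : (p.2, p.1) ∈ (Finset.univ : Finset (Fin n)).offDiag :=
      Finset.mem_offDiag.2 ⟨Finset.mem_univ _, Finset.mem_univ _, hpne.symm⟩
    rw [integral_finset_sum _ fun q _ => (int_η4 p.1 p.2 q.1 q.2).const_mul _]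
    have hq : ∀ q ∈ Finset.univ.offDiag, ∫ ω, a p.1 p.2 * a q.1 q.2 *
        (η p.1 ω * η p.2 ω * (η q.1 ω * η q.2 ω)) ∂P
        = (if q = p then a p.1 p.2 * a q.1 q.2 else 0)
          + (if q = (p.2, p.1) then a p.1 p.2 * a q.1 q.2 else 0) := by
      intro q hqmem
      obtain ⟨-, -, hqne⟩ := Finset.mem_offDiag.1 hqmem
      rw [MeasureTheory.integral_const_mul, hη4 p.1 p.2 q.1 q.2 hpne hqne]
      simp only [Prod.mk.eta]
      by_cases h1 : q = p
      · have h2 : ¬ q = (p.2, p.1) := by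
          subst h1; intro h; exact hpne (Prod.ext_iff.1 h).1
        rw [if_pos (Or.inl h1), mul_one, if_pos h1, if_neg h2, add_zero]
      · by_cases h2 : q = (p.2, p.1)
        · rw [if_pos (Or.inr h2), mul_one, if_neg h1, if_pos h2, zero_add]
        · rw [if_neg (by tauto), mul_zero, if_neg h1, if_neg h2, add_zero]
    rw [Finset.sum_congr rfl hq, Finset.sum_add_distrib, Finset.sum_ite_eq' _ p _,
        Finset.sum_ite_eq' _ (p.2, p.1) _, if_pos hp, if_pos hps]
    have e2 : a (p.2, p.1).1 (p.2, p.1).2 = a p.1 p.2 := hsymm p.1 p.2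
    rw [e2]; ring
  -- Gram bound : ∑ offdiag a² ≤ D
  have hAA : ∑ p ∈ Finset.univ.offDiag, a p.1 p.2 ^ 2 ≤ (D:ℝ) := by
    have h1 : ∑ p ∈ Finset.univ.offDiag, a p.1 p.2 ^ 2
        ≤ ∑ p ∈ (Finset.univ ×ˢ Finset.univ : Finset (Fin n × Fin n)), a p.1 p.2 ^ 2 :=
      Finset.sum_le_sum_of_subset_of_nonneg
        (fun p _ => Finset.mem_product.2 ⟨Finset.mem_univ _, Finset.mem_univ _⟩)
        fun p _ _ => sq_nonneg _
    refine h1.trans (le_of_eq ?_)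
    rw [Finset.sum_product]
    have e1 : ∀ i i' : Fin n, a i i' ^ 2 = ∑ j, ∑ k, (φ j i * φ k i) * (φ j i' * φ k i') := by
      intro i i'
      simp only [ha_def]
      rw [sq, Finset.sum_mul_sum]
      exact Finset.sum_congr rfl fun j _ => Finset.sum_congr rfl fun k _ => by ring
    calc ∑ i, ∑ i', a i i' ^ 2
        = ∑ i, ∑ i', ∑ j, ∑ k, (φ j i * φ k i) * (φ j i' * φ k i') :=
          Finset.sum_congr rfl fun i _ => Finset.sum_congr rfl fun i' _ => e1 i i'
      _ = ∑ i, ∑ j, ∑ i', ∑ k, (φ j i * φ k i) * (φ j i' * φ k i') :=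
          Finset.sum_congr rfl fun i _ => Finset.sum_comm
      _ = ∑ j, ∑ i, ∑ i', ∑ k, (φ j i * φ k i) * (φ j i' * φ k i') := Finset.sum_comm
      _ = ∑ j, ∑ i, ∑ k, ∑ i', (φ j i * φ k i) * (φ j i' * φ k i') :=
          Finset.sum_congr rfl fun j _ => Finset.sum_congr rfl fun i _ => Finset.sum_comm
      _ = ∑ j, ∑ k, ∑ i, ∑ i', (φ j i * φ k i) * (φ j i' * φ k i') :=
          Finset.sum_congr rfl fun j _ => Finset.sum_comm
      _ = ∑ j, ∑ k, (if j = k then (1:ℝ) else 0) * (if j = k then (1:ℝ) else 0) := by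
          refine Finset.sum_congr rfl fun j _ => Finset.sum_congr rfl fun k _ => ?_
          rw [← Finset.sum_mul_sum, horth j k]
      _ = (D:ℝ) := by simp [Finset.sum_ite_eq, ite_mul, mul_ite]
  -- bound and regularity of S and g
  have hSmeas : Measurable S := by
    simp only [hS_def, hX_def]
    exact Finset.measurable_sum _ fun j _ =>
      (Finset.measurable_sum _ fun i _ => (hηmeas i).mul_const _).pow_const 2
  have hSnonneg : ∀ ω, 0 ≤ S ω := fun ω => Finset.sum_nonneg fun j _ => sq_nonneg _
  set CS : ℝ := ∑ j, (∑ i, |φ j i|) ^ 2 with hCS_def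
  have hSbound : ∀ ω, S ω ≤ CS := by
    intro ω
    refine Finset.sum_le_sum fun j _ => ?_
    have h1 : |X j ω| ≤ ∑ i, |φ j i| := by
      simp only [hX_def]
      refine (Finset.abs_sum_le_sum_abs _ _).trans (Finset.sum_le_sum fun i _ => ?_)
      rw [abs_mul]
      calc |η i ω| * |φ j i| ≤ 1 * |φ j i| :=
            mul_le_mul_of_nonneg_right (hηabs i ω) (abs_nonneg _)
      _ = |φ j i| := one_mul _
    calc X j ω ^ 2 = |X j ω| ^ 2 := (sq_abs _).symm
    _ ≤ (∑ i, |φ j i|) ^ 2 := pow_le_pow_left₀ (abs_nonneg _) h1 2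
  set g : Ω → ℝ := fun ω => Real.sqrt (S ω) with hg_def
  have hgmeas : Measurable g := Real.continuous_sqrt.measurable.comp hSmeas
  have hgnonneg : ∀ ω, 0 ≤ g ω := fun ω => Real.sqrt_nonneg _
  have hgsq : ∀ ω, g ω ^ 2 = S ω := fun ω => Real.sq_sqrt (hSnonneg ω)
  have hgbound : ∀ ω, |g ω| ≤ Real.sqrt CS := fun ω => by
    rw [abs_of_nonneg (hgnonneg ω)]
    exact Real.sqrt_le_sqrt (hSbound ω)
  have hgint : Integrable g P := hbi g _ hgmeas hgbound
  have hg2int : Integrable (fun ω => g ω ^ 2) P := by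
    refine hbi _ CS (hgmeas.pow_const 2) fun ω => ?_
    rw [abs_of_nonneg (sq_nonneg _), hgsq]
    exact hSbound ω
  have hg2D : ∫ ω, g ω ^ 2 ∂P = (D:ℝ) := by
    simp_rw [hgsq]
    exact hSint
  -- identification of the integral of χ
  have hIg : ∫ ω, χ ω ∂P = ∫ ω, g ω ∂P := by
    refine integral_congr_ae ?_
    have hae : ∀ᵐ ω ∂P, ∀ i, η i ω = ε i ω := (MeasureTheory.ae_all_iff).2 hηae
    filter_upwards [hae] with ω hω
    rw [hχ]
    simp only [hg_def, hS_def, hX_def]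
    congr 1
    refine Finset.sum_congr rfl fun j _ => ?_
    congr 1
    exact Finset.sum_congr rfl fun i _ => by rw [hω i]
  rw [hIg]
  set I : ℝ := ∫ ω, g ω ∂P with hI_def
  have hInonneg : 0 ≤ I := integral_nonneg hgnonneg
  have hexpand : ∀ c : ℝ, ∫ ω, (g ω - c) ^ 2 ∂P = (D:ℝ) - 2 * c * I + c ^ 2 := by
    intro c
    have hpt : ∀ ω, (g ω - c) ^ 2 = g ω ^ 2 - (2 * c) * g ω + c ^ 2 := fun ω => by ring
    simp_rw [hpt]
    have h1 : Integrable (fun ω => g ω ^ 2 - (2 * c) * g ω) P :=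
      hg2int.sub (hgint.const_mul (2 * c))
    rw [integral_add h1 (integrable_const _), integral_sub hg2int (hgint.const_mul (2 * c)),
        MeasureTheory.integral_const_mul, integral_const, hg2D]
    simp [measure_univ, hI_def]
  -- upper bound
  have hupper : I ^ 2 ≤ (D:ℝ) := by
    have h0 : 0 ≤ ∫ ω, (g ω - I) ^ 2 ∂P := integral_nonneg fun ω => sq_nonneg _
    rw [hexpand I] at h0
    nlinarith
  -- lower bound
  have hT2le : ∫ ω, T ω ^ 2 ∂P ≤ 2 * (D:ℝ) := by
    rw [hT2int]; nlinarith [hAA]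
  have hT2intble : Integrable (fun ω => T ω ^ 2) P := by
    refine hbi _ ((∑ p ∈ Finset.univ.offDiag, |a p.1 p.2|) ^ 2) (hTmeas.pow_const 2) fun ω => ?_
    rw [abs_of_nonneg (sq_nonneg _), ← sq_abs]
    exact pow_le_pow_left₀ (abs_nonneg _) (hTbound ω) 2
  have hptle : ∀ ω, (g ω - Real.sqrt D) ^ 2 ≤ T ω ^ 2 / D := by
    intro ω
    rw [le_div_iff₀ hDposR]
    have h1 : g ω ^ 2 = S ω := hgsq ω
    have h2 : Real.sqrt (D:ℝ) ^ 2 = (D:ℝ) := Real.sq_sqrt (le_of_lt hDposR)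
    have h3 : S ω = (D:ℝ) + T ω := hdecomp ω
    have h4 : 0 ≤ g ω := hgnonneg ω
    have h5 : 0 ≤ Real.sqrt (D:ℝ) := Real.sqrt_nonneg _
    have hTval : T ω = g ω ^ 2 - Real.sqrt (D:ℝ) ^ 2 := by rw [h1, h2]; linarith
    have key : T ω ^ 2 - (g ω - Real.sqrt (D:ℝ)) ^ 2 * (D:ℝ)
        = (g ω - Real.sqrt (D:ℝ)) ^ 2 * g ω * (g ω + 2 * Real.sqrt (D:ℝ)) := by
      rw [hTval]
      linear_combination (g ω - Real.sqrt (D:ℝ)) ^ 2 * h2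
    nlinarith [mul_nonneg (mul_nonneg (sq_nonneg (g ω - Real.sqrt (D:ℝ))) h4)
      (by linarith : (0:ℝ) ≤ g ω + 2 * Real.sqrt (D:ℝ))]
  have hgDint : Integrable (fun ω => (g ω - Real.sqrt (D:ℝ)) ^ 2) P := by
    refine hbi _ ((Real.sqrt CS + Real.sqrt (D:ℝ)) ^ 2)
      ((hgmeas.sub measurable_const).pow_const 2) fun ω => ?_
    rw [abs_of_nonneg (sq_nonneg _), ← sq_abs]
    refine pow_le_pow_left₀ (abs_nonneg _) ?_ 2
    refine (abs_sub _ _).trans ?_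
    have := hgbound ω
    rw [abs_of_nonneg (Real.sqrt_nonneg (D:ℝ))]
    linarith
  have hlow1 : ∫ ω, (g ω - Real.sqrt (D:ℝ)) ^ 2 ∂P ≤ 2 := by
    calc ∫ ω, (g ω - Real.sqrt (D:ℝ)) ^ 2 ∂P ≤ ∫ ω, T ω ^ 2 / (D:ℝ) ∂P :=
          integral_mono hgDint (hT2intble.div_const _) hptle
    _ = (∫ ω, T ω ^ 2 ∂P) / (D:ℝ) := integral_div _ _
    _ ≤ 2 * (D:ℝ) / (D:ℝ) := by gcongr
    _ = 2 := by field_simp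
  have hlow2 : Real.sqrt (D:ℝ) * I ≥ (D:ℝ) - 1 := by
    have := hexpand (Real.sqrt (D:ℝ))
    rw [Real.sq_sqrt (le_of_lt hDposR)] at this
    rw [this] at hlow1
    linarith
  have h2 : Real.sqrt (D:ℝ) ^ 2 = (D:ℝ) := Real.sq_sqrt (le_of_lt hDposR)
  have hlower : (D:ℝ) - 2 ≤ I ^ 2 := by
    have h6 : ((D:ℝ) - 1) * ((D:ℝ) - 1) ≤ (Real.sqrt (D:ℝ) * I) * (Real.sqrt (D:ℝ) * I) :=
      mul_self_le_mul_self (by linarith) hlow2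
    have h8 : ((D:ℝ) - 1) * ((D:ℝ) - 1) ≤ (D:ℝ) * I ^ 2 := by
      have e : (Real.sqrt (D:ℝ) * I) * (Real.sqrt (D:ℝ) * I) = Real.sqrt (D:ℝ) ^ 2 * I ^ 2 := by
        ring
      rw [e, h2] at h6
      exact h6
    nlinarith [h8, hDposR]
  exact ⟨hlower, hupper⟩
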